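/- Let Γ ⊂ Ω* be a finite maximal antichain for the recurrent IFS I = {X; f_{ij}, p_{ij}} and μ the associated invariant Borel probability measure on the limit set E, satisfying μ = Σ_{w∈Γ} p_w μ∘f_w^{-1}. Then for every n ∈ ℕ with n ≥ |Γ| and every choice of natural numbers n_w with Σ_{w∈Γ} n_w ≤ n, one has V_{n,r}(μ) ≤ Σ_{w∈Γ} p_w s_w^r V_{n_w,r}(μ). -/

import Mathlib

open scoped Classical
open MeasureTheory

/-- the `n`-th quantization error of order `r` of a measure on ℝ^k. -/
noncomputable def quantErr {k : ℕ} (μ : Measure (EuclideanSpace ℝ (Fin k)))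
    (n : ℕ) (r : ℝ) : ℝ :=
  sInf {v | ∃ A : Finset (EuclideanSpace ℝ (Fin k)), A.Nonempty ∧ A.card ≤ n ∧
    v = ∫ x, Metric.infDist x ↑A ^ r ∂μ}

section Aux

variable {k : ℕ}

lemma contAux (B : Finset (EuclideanSpace ℝ (Fin k))) {r : ℝ} (hr : 0 ≤ r) :
    Continuous fun x => Metric.infDist x (B : Set (EuclideanSpace ℝ (Fin k))) ^ r :=
  (Metric.continuous_infDist_pt _).rpow_const (fun _ => Or.inr hr)

lemma rpow_add_le {u C r : ℝ} (hu : 0 ≤ u) (hC : 0 ≤ C) (hr : 0 ≤ r) :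
    (u + C) ^ r ≤ 2 ^ r * (u ^ r + C ^ r) := by
  have h1 : u + C ≤ 2 * max u C := by
    rcases le_total u C with h | h
    · simp [max_eq_right h]; linarith
    · simp [max_eq_left h]; linarith
  have hm : (0 : ℝ) ≤ max u C := le_trans hu (le_max_left _ _)
  calc (u + C) ^ r ≤ (2 * max u C) ^ r :=
        Real.rpow_le_rpow (by linarith) h1 hr
    _ = 2 ^ r * (max u C) ^ r := Real.mul_rpow (by norm_num) hm
    _ ≤ 2 ^ r * (u ^ r + C ^ r) := by
        have h2 : (max u C) ^ r ≤ u ^ r + C ^ r := by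
          rcases le_total u C with h | h
          · rw [max_eq_right h]
            have := Real.rpow_nonneg hu r; linarith
          · rw [max_eq_left h]
            have := Real.rpow_nonneg hC r; linarith
        have : (0:ℝ) ≤ (2:ℝ) ^ r := Real.rpow_nonneg (by norm_num) r
        nlinarith

/-- Integrability of `(infDist · A)^r` transfers between finite sets. -/
lemma integrable_transfer (μ : Measure (EuclideanSpace ℝ (Fin k)))
    [IsProbabilityMeasure μ] {r : ℝ} (hr : 0 < r)
    {A B : Finset (EuclideanSpace ℝ (Fin k))} (hA : A.Nonempty)
    (hint : Integrable (fun x => Metric.infDist x (A : Set (EuclideanSpace ℝ (Fin k))) ^ r) μ) :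
    Integrable (fun x => Metric.infDist x (B : Set (EuclideanSpace ℝ (Fin k))) ^ r) μ := by
  set C : ℝ := max (A.sup' hA (fun a => Metric.infDist a (B : Set (EuclideanSpace ℝ (Fin k))))) 0 with hCdef
  have hC0 : 0 ≤ C := le_max_right _ _
  have hptw : ∀ x, Metric.infDist x (B : Set (EuclideanSpace ℝ (Fin k))) ≤ Metric.infDist x (A : Set (EuclideanSpace ℝ (Fin k))) + C := by
    intro x
    obtain ⟨a, haA, ha⟩ := (A.finite_toSet.isCompact).exists_infDist_eq_dist
      (by exact_mod_cast hA) x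
    calc Metric.infDist x (B : Set (EuclideanSpace ℝ (Fin k))) ≤ Metric.infDist a (B : Set (EuclideanSpace ℝ (Fin k))) + dist x a :=
          Metric.infDist_le_infDist_add_dist
      _ ≤ C + Metric.infDist x (A : Set (EuclideanSpace ℝ (Fin k))) := by
          rw [ha]
          have : Metric.infDist a (B : Set (EuclideanSpace ℝ (Fin k))) ≤ A.sup' hA (fun a => Metric.infDist a (B : Set (EuclideanSpace ℝ (Fin k)))) :=
            Finset.le_sup' (fun a => Metric.infDist a (B : Set (EuclideanSpace ℝ (Fin k)))) haA
          have h2 : A.sup' hA (fun a => Metric.infDist a (B : Set (EuclideanSpace ℝ (Fin k)))) ≤ C := le_max_left _ _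
          linarith
      _ = Metric.infDist x (A : Set (EuclideanSpace ℝ (Fin k))) + C := by ring
  have hbound : Integrable (fun x => 2 ^ r * (Metric.infDist x (A : Set (EuclideanSpace ℝ (Fin k))) ^ r + C ^ r)) μ :=
    (hint.add (integrable_const _)).const_mul _
  refine hbound.mono' ((contAux B hr.le).aestronglyMeasurable) ?_
  filter_upwards with x
  have h0 : 0 ≤ Metric.infDist x (B : Set (EuclideanSpace ℝ (Fin k))) := Metric.infDist_nonneg
  rw [Real.norm_of_nonneg (Real.rpow_nonneg h0 r)]
  calc Metric.infDist x (B : Set (EuclideanSpace ℝ (Fin k))) ^ r ≤ (Metric.infDist x (A : Set (EuclideanSpace ℝ (Fin k))) + C) ^ r :=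
        Real.rpow_le_rpow h0 (hptw x) hr.le
    _ ≤ 2 ^ r * (Metric.infDist x (A : Set (EuclideanSpace ℝ (Fin k))) ^ r + C ^ r) :=
        rpow_add_le Metric.infDist_nonneg hC0 hr.le

lemma quantErr_nonneg (μ : Measure (EuclideanSpace ℝ (Fin k))) (n : ℕ) (r : ℝ) :
    0 ≤ quantErr μ n r := by
  apply Real.sInf_nonneg
  rintro v ⟨A, -, -, rfl⟩
  exact integral_nonneg fun x => Real.rpow_nonneg Metric.infDist_nonneg r

end Aux

/-- if `μ = Σ_{w∈Γ} p_w μ∘f_w⁻¹` over a finite maximal antichain `Γ`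
(abstracted as a finite index type), with `f_w` having upper Lipschitz constant
`s_w`, then for `n ≥ |Γ|` and any `n_w ∈ ℕ` with `Σ n_w ≤ n`,
`V_{n,r}(μ) ≤ Σ_w p_w s_w^r V_{n_w,r}(μ)`. -/
theorem stmt10 {k : ℕ} (μ : Measure (EuclideanSpace ℝ (Fin k)))
    [IsProbabilityMeasure μ] (r : ℝ) (hr : 0 < r)
    {ι : Type*} [Fintype ι] [Nonempty ι]
    (f : ι → EuclideanSpace ℝ (Fin k) → EuclideanSpace ℝ (Fin k))
    (pp ss : ι → ℝ)
    (hpp : ∀ w, 0 < pp w) (hpsum : ∑ w, pp w = 1)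
    (hss : ∀ w, 0 < ss w ∧ ss w < 1)
    (hLip : ∀ w x y, dist (f w x) (f w y) ≤ ss w * dist x y)
    (hinv : μ = ∑ w, (ENNReal.ofReal (pp w)) • μ.map (f w))
    (n : ℕ) (hn : Fintype.card ι ≤ n)
    (nw : ι → ℕ) (hnw : ∀ w, 1 ≤ nw w) (hnwsum : ∑ w, nw w ≤ n) :
    quantErr μ n r ≤ ∑ w, pp w * ss w ^ r * quantErr μ (nw w) r := by
  have hfcont : ∀ w, Continuous (f w) := by
    intro w
    exact (LipschitzWith.of_dist_le_mul (K := (ss w).toNNReal)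
      (fun x y => by rw [Real.coe_toNNReal _ (hss w).1.le]; exact hLip w x y)).continuous
  have hssr_pos : ∀ w, 0 < ss w ^ r := fun w => Real.rpow_pos_of_pos (hss w).1 r
  have hT : 0 < ∑ w, pp w * ss w ^ r :=
    Finset.sum_pos (fun w _ => mul_pos (hpp w) (hssr_pos w)) Finset.univ_nonempty
  set T := ∑ w, pp w * ss w ^ r with hTdef
  have hRHSnn : 0 ≤ ∑ w, pp w * ss w ^ r * quantErr μ (nw w) r :=
    Finset.sum_nonneg fun w _ =>
      mul_nonneg (mul_nonneg (hpp w).le (hssr_pos w).le) (quantErr_nonneg μ _ r)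
  refine le_of_forall_pos_le_add fun ε hε => ?_
  set δ := ε / T with hδdef
  have hδ : 0 < δ := div_pos hε hT
  -- choose near-optimal finite sets for each w
  have hex : ∀ w, ∃ A : Finset (EuclideanSpace ℝ (Fin k)), A.Nonempty ∧ A.card ≤ nw w ∧
      ∫ x, Metric.infDist x ↑A ^ r ∂μ < quantErr μ (nw w) r + δ := by
    intro w
    have hne : {v | ∃ A : Finset (EuclideanSpace ℝ (Fin k)), A.Nonempty ∧ A.card ≤ nw w ∧
        v = ∫ x, Metric.infDist x ↑A ^ r ∂μ}.Nonempty := by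
      refine ⟨_, ⟨{0}, Finset.singleton_nonempty _, ?_, rfl⟩⟩
      simpa using hnw w
    obtain ⟨v, ⟨A, h1, h2, rfl⟩, hlt⟩ := Real.lt_sInf_add_pos hne hδ
    exact ⟨A, h1, h2, hlt⟩
  choose A hAne hAcard hAint using hex
  set Aall : Finset (EuclideanSpace ℝ (Fin k)) :=
    Finset.univ.biUnion (fun w => (A w).image (f w)) with hAalldef
  have hAallne : Aall.Nonempty := by
    obtain ⟨w⟩ := (inferInstance : Nonempty ι)
    obtain ⟨a, ha⟩ := hAne w
    exact ⟨f w a, Finset.mem_biUnion.2 ⟨w, Finset.mem_univ _,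
      Finset.mem_image.2 ⟨a, ha, rfl⟩⟩⟩
  have hAallcard : Aall.card ≤ n :=
    le_trans (Finset.card_biUnion_le) (le_trans (Finset.sum_le_sum fun w _ =>
      le_trans (Finset.card_image_le) (hAcard w)) hnwsum)
  set g : EuclideanSpace ℝ (Fin k) → ℝ := fun x => Metric.infDist x ↑Aall ^ r with hgdef
  have hgcont : Continuous g := contAux Aall hr.le
  have hgnn : ∀ x, 0 ≤ g x := fun x => Real.rpow_nonneg Metric.infDist_nonneg r
  have hbdd : BddBelow {v | ∃ A : Finset (EuclideanSpace ℝ (Fin k)), A.Nonempty ∧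
      A.card ≤ n ∧ v = ∫ x, Metric.infDist x ↑A ^ r ∂μ} := by
    refine ⟨0, ?_⟩
    rintro v ⟨B, -, -, rfl⟩
    exact integral_nonneg fun x => Real.rpow_nonneg Metric.infDist_nonneg r
  have hkey : quantErr μ n r ≤ ∫ x, g x ∂μ :=
    csInf_le hbdd ⟨Aall, hAallne, hAallcard, rfl⟩
  -- pointwise contraction bound
  have hptw : ∀ w y, g (f w y) ≤ ss w ^ r * Metric.infDist y ↑(A w) ^ r := by
    intro w y
    obtain ⟨a, haA, ha⟩ := ((A w).finite_toSet.isCompact).exists_infDist_eq_dist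
      (by exact_mod_cast hAne w) y
    have hmem : f w a ∈ (Aall : Set (EuclideanSpace ℝ (Fin k))) := by
      exact_mod_cast Finset.mem_biUnion.2 ⟨w, Finset.mem_univ _,
        Finset.mem_image.2 ⟨a, haA, rfl⟩⟩
    have h1 : Metric.infDist (f w y) ↑Aall ≤ ss w * Metric.infDist y ↑(A w) := by
      calc Metric.infDist (f w y) ↑Aall ≤ dist (f w y) (f w a) :=
            Metric.infDist_le_dist_of_mem hmem
        _ ≤ ss w * dist y a := hLip w y a
        _ = ss w * Metric.infDist y ↑(A w) := by rw [ha]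
    calc g (f w y) ≤ (ss w * Metric.infDist y ↑(A w)) ^ r :=
          Real.rpow_le_rpow Metric.infDist_nonneg h1 hr.le
      _ = ss w ^ r * Metric.infDist y ↑(A w) ^ r :=
          Real.mul_rpow (hss w).1.le Metric.infDist_nonneg
  by_cases hg : Integrable g μ
  · -- main case
    have hintw : ∀ w, Integrable (fun y => Metric.infDist y ↑(A w) ^ r) μ :=
      fun w => integrable_transfer μ hr hAallne hg
    have hcompint : ∀ w, Integrable (fun y => g (f w y)) μ := by
      intro w
      refine (((hintw w).const_mul (ss w ^ r)).mono'
        ((hgcont.comp (hfcont w)).aestronglyMeasurable) ?_)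
      filter_upwards with y
      rw [Real.norm_of_nonneg (hgnn _)]
      exact hptw w y
    have hmono : ∀ w, (ENNReal.ofReal (pp w)) • μ.map (f w) ≤ μ := by
      intro w
      conv_rhs => rw [hinv]
      rw [Measure.le_iff]
      intro s hs
      rw [Measure.finset_sum_apply]
      exact Finset.single_le_sum
        (f := fun i => ((ENNReal.ofReal (pp i)) • μ.map (f i)) s)
        (fun i _ => zero_le) (Finset.mem_univ w)
    have hsplit : ∫ x, g x ∂μ = ∑ w, pp w * ∫ y, g (f w y) ∂μ := by
      conv_lhs => rw [hinv]
      rw [integral_finset_sum_measure (fun w _ => hg.mono_measure (hmono w))]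
      refine Finset.sum_congr rfl fun w _ => ?_
      rw [integral_smul_measure, ENNReal.toReal_ofReal (hpp w).le,
        integral_map ((hfcont w).measurable.aemeasurable)
          (hgcont.aestronglyMeasurable), smul_eq_mul]
    calc quantErr μ n r ≤ ∫ x, g x ∂μ := hkey
      _ = ∑ w, pp w * ∫ y, g (f w y) ∂μ := hsplit
      _ ≤ ∑ w, pp w * (ss w ^ r * (quantErr μ (nw w) r + δ)) := by
          refine Finset.sum_le_sum fun w _ => ?_
          refine mul_le_mul_of_nonneg_left ?_ (hpp w).le
          calc ∫ y, g (f w y) ∂μ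
              ≤ ∫ y, ss w ^ r * Metric.infDist y ↑(A w) ^ r ∂μ :=
                integral_mono (hcompint w) ((hintw w).const_mul _) (hptw w)
            _ = ss w ^ r * ∫ y, Metric.infDist y ↑(A w) ^ r ∂μ :=
                integral_const_mul _ _
            _ ≤ ss w ^ r * (quantErr μ (nw w) r + δ) :=
                mul_le_mul_of_nonneg_left (hAint w).le (hssr_pos w).le
      _ = (∑ w, pp w * ss w ^ r * quantErr μ (nw w) r) + δ * T := by
          rw [hTdef, Finset.mul_sum, ← Finset.sum_add_distrib]
          exact Finset.sum_congr rfl fun w _ => by ring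
      _ = (∑ w, pp w * ss w ^ r * quantErr μ (nw w) r) + ε := by
          rw [hδdef, div_mul_cancel₀ _ hT.ne']
  · -- non-integrable case: the integral is 0
    rw [integral_undef hg] at hkey
    linarith
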